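/- arXiv:2111.05219 — 5 statements merged into one kernel-verified Lean document; each statement's English description precedes it below -/
import Mathlib

section
/- If p is a prime with p ≡ 3 (mod 4), then for every nonzero d ∈ Z_p, the number of a ∈ Z_p such that a, a+d, a+2d are all nonzero quadratic residues modulo p is exactly ⌊(p-3)/8⌋. -/
open Finset

private lemma qc_shift_sum (p : ℕ) [Fact p.Prime] (hF : ringChar (ZMod p) ≠ 2)
    {c : ZMod p} (hc : c ≠ 0) :
    ∑ a : ZMod p, quadraticChar (ZMod p) (a * (a + c)) = -1 := by
  set χ := quadraticChar (ZMod p) with hχ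
  have h0 : ∑ a ∈ Finset.univ.erase (0 : ZMod p), χ (a * (a + c)) + χ (0 * (0 + c))
      = ∑ a : ZMod p, χ (a * (a + c)) := Finset.sum_erase_add _ _ (mem_univ 0)
  have hz : χ (0 * (0 + c)) = 0 := by rw [zero_mul]; exact quadraticChar_zero
  rw [← h0, hz, add_zero]
  have key : ∑ a ∈ Finset.univ.erase (0 : ZMod p), χ (a * (a + c))
      = ∑ s ∈ Finset.univ.erase (1 : ZMod p), χ s := by
    refine Finset.sum_nbij' (fun a => 1 + c * a⁻¹) (fun s => c * (s - 1)⁻¹) ?_ ?_ ?_ ?_ ?_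
    · intro a ha
      simp only [mem_erase, mem_univ, and_true] at ha ⊢
      intro h
      have : c * a⁻¹ = 0 := by linear_combination h
      rcases mul_eq_zero.mp this with h' | h'
      · exact hc h'
      · exact ha (inv_eq_zero.mp h')
    · intro s hs
      simp only [mem_erase, mem_univ, and_true] at hs ⊢
      have hs1 : s - 1 ≠ 0 := sub_ne_zero.mpr hs
      exact mul_ne_zero hc (inv_ne_zero hs1)
    · intro a ha
      simp only [mem_erase, mem_univ, and_true] at ha
      field_simp
      rw [show a + c - a = c by ring, div_self hc]
    · intro s hs
      simp only [mem_erase, mem_univ, and_true] at hs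
      have hs1 : s - 1 ≠ 0 := sub_ne_zero.mpr hs
      field_simp
      ring
    · intro a ha
      simp only [mem_erase, mem_univ, and_true] at ha
      have hrw : a * (a + c) = a ^ 2 * (1 + c * a⁻¹) := by
        field_simp
      rw [hrw, map_mul, quadraticChar_sq_one' ha, one_mul]
  rw [key]
  have h1 : ∑ s ∈ Finset.univ.erase (1 : ZMod p), χ s + χ 1 = ∑ s : ZMod p, χ s :=
    Finset.sum_erase_add _ _ (mem_univ 1)
  have hsum : ∑ s : ZMod p, χ s = 0 := quadraticChar_sum_zero hF
  have hone : χ 1 = 1 := map_one χ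
  linarith [h1, hsum, hone]

private lemma qc_cubic_sum (p : ℕ) [Fact p.Prime]
    (hneg : quadraticChar (ZMod p) (-1) = -1) (d : ZMod p) :
    ∑ a : ZMod p, quadraticChar (ZMod p) (a * (a + d) * (a + 2 * d)) = 0 := by
  set χ := quadraticChar (ZMod p) with hχ
  have key : ∑ a : ZMod p, χ (a * (a + d) * (a + 2 * d))
      = ∑ a : ZMod p, χ ((-2 * d - a) * ((-2 * d - a) + d) * ((-2 * d - a) + 2 * d)) :=
    Fintype.sum_equiv (Equiv.subLeft (-2 * d)) _ _ (fun x => by simp only [Equiv.subLeft_apply]; congr 1; ring)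
  have pt : ∀ a : ZMod p, χ ((-2 * d - a) * ((-2 * d - a) + d) * ((-2 * d - a) + 2 * d))
      = - χ (a * (a + d) * (a + 2 * d)) := by
    intro a
    have hrw : (-2 * d - a) * ((-2 * d - a) + d) * ((-2 * d - a) + 2 * d)
        = -1 * (a * (a + d) * (a + 2 * d)) := by ring
    rw [hrw, map_mul, hneg, neg_one_mul]
  have key2 : ∑ a : ZMod p, χ (a * (a + d) * (a + 2 * d))
      = - ∑ a : ZMod p, χ (a * (a + d) * (a + 2 * d)) := by
    conv_lhs => rw [key, Finset.sum_congr rfl (fun a _ => pt a)]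
    exact Finset.sum_neg_distrib (G := ℤ) _
  linarith

theorem three_ap_residues_count (p : ℕ) [Fact p.Prime] (hp : p % 4 = 3)
    (d : ZMod p) (hd : d ≠ 0) :
    (Finset.univ.filter (fun a : ZMod p =>
      a ≠ 0 ∧ a + d ≠ 0 ∧ a + 2 * d ≠ 0 ∧
      IsSquare a ∧ IsSquare (a + d) ∧ IsSquare (a + 2 * d))).card = (p - 3) / 8 := by
  set χ := quadraticChar (ZMod p) with hχdef
  have hp2 : p ≠ 2 := by omega
  have hF : ringChar (ZMod p) ≠ 2 := by
    rw [ZMod.ringChar_zmod_n]; exact hp2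
  have hneg : χ (-1) = -1 := by
    rw [hχdef, quadraticChar_neg_one_iff_not_isSquare, ZMod.exists_sq_eq_neg_one_iff]
    simp [hp]
  have h2 : (2 : ZMod p) ≠ 0 := by
    have h3 : 3 ≤ p := by omega
    intro h
    have : ((2 : ℕ) : ZMod p) = 0 := by exact_mod_cast h
    rw [ZMod.natCast_eq_zero_iff] at this
    have := Nat.le_of_dvd (by norm_num) this
    omega
  have hd2 : 2 * d ≠ 0 := mul_ne_zero h2 hd
  have hshift : ∀ c : ZMod p, ∑ a : ZMod p, χ (a + c) = 0 := by
    intro c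
    have h := Fintype.sum_equiv (Equiv.subRight c) (fun a : ZMod p => χ a)
      (fun a : ZMod p => χ (a + c)) (fun x => by show χ x = χ (x - c + c); rw [sub_add_cancel])
    rw [← h]
    exact quadraticChar_sum_zero hF
  have hpair3 : ∑ a : ZMod p, χ ((a + d) * (a + 2 * d)) = -1 := by
    have h := Fintype.sum_equiv (Equiv.subRight d) (fun b : ZMod p => χ (b * (b + d)))
      (fun a : ZMod p => χ ((a + d) * (a + 2 * d)))
      (fun x => by
        show χ (x * (x + d)) = χ ((x - d + d) * (x - d + 2 * d)); congr 1; ring)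
    rw [← h]
    exact qc_shift_sum p hF hd
  have expand : ∀ a : ZMod p,
      (1 + χ a) * (1 + χ (a + d)) * (1 + χ (a + 2 * d))
        = 1 + (χ a + (χ (a + d) + (χ (a + 2 * d) + (χ (a * (a + d)) +
            (χ (a * (a + 2 * d)) + (χ ((a + d) * (a + 2 * d)) +
              χ (a * (a + d) * (a + 2 * d)))))))) := by
    intro a; simp only [map_mul]; ring
  have hS1 : ∑ a : ZMod p, (1 + χ a) * (1 + χ (a + d)) * (1 + χ (a + 2 * d))
      = (p : ℤ) - 3 := by
    rw [Finset.sum_congr rfl (fun a _ => expand a)]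
    rw [Finset.sum_add_distrib, Finset.sum_add_distrib, Finset.sum_add_distrib,
      Finset.sum_add_distrib, Finset.sum_add_distrib, Finset.sum_add_distrib,
      Finset.sum_add_distrib]
    rw [quadraticChar_sum_zero hF, hshift d, hshift (2 * d),
      qc_shift_sum p hF hd, qc_shift_sum p hF hd2, hpair3, qc_cubic_sum p hneg d]
    rw [Finset.sum_const, Finset.card_univ, ZMod.card]
    push_cast
    ring
  have hS2 : ∑ a : ZMod p, (1 + χ a) * (1 + χ (a + d)) * (1 + χ (a + 2 * d))
      = 8 * ((Finset.univ.filter (fun a : ZMod p =>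
        a ≠ 0 ∧ a + d ≠ 0 ∧ a + 2 * d ≠ 0 ∧
        IsSquare a ∧ IsSquare (a + d) ∧ IsSquare (a + 2 * d))).card : ℤ)
        + (2 + 2 * χ 2) := by
    rw [← Finset.sum_filter_add_sum_filter_not Finset.univ (fun a : ZMod p =>
        a ≠ 0 ∧ a + d ≠ 0 ∧ a + 2 * d ≠ 0 ∧
        IsSquare a ∧ IsSquare (a + d) ∧ IsSquare (a + 2 * d))]
    congr 1
    · have h8 : ∀ a ∈ Finset.univ.filter (fun a : ZMod p =>
          a ≠ 0 ∧ a + d ≠ 0 ∧ a + 2 * d ≠ 0 ∧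
          IsSquare a ∧ IsSquare (a + d) ∧ IsSquare (a + 2 * d)),
          (1 + χ a) * (1 + χ (a + d)) * (1 + χ (a + 2 * d)) = 8 := by
        intro a ha
        rw [Finset.mem_filter] at ha
        obtain ⟨-, h1, h2', h3, h4, h5, h6⟩ := ha
        rw [(quadraticChar_one_iff_isSquare h1).mpr h4,
          (quadraticChar_one_iff_isSquare h2').mpr h5,
          (quadraticChar_one_iff_isSquare h3).mpr h6]
        norm_num
      rw [Finset.sum_congr rfl h8, Finset.sum_const, nsmul_eq_mul]
      ring
    · have hsub : ({0, -d, -2 * d} : Finset (ZMod p)) ⊆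
          Finset.univ.filter (fun a : ZMod p => ¬(a ≠ 0 ∧ a + d ≠ 0 ∧ a + 2 * d ≠ 0 ∧
            IsSquare a ∧ IsSquare (a + d) ∧ IsSquare (a + 2 * d))) := by
        intro a ha
        simp only [Finset.mem_insert, Finset.mem_singleton] at ha
        simp only [Finset.mem_filter, Finset.mem_univ, true_and]
        rcases ha with rfl | rfl | rfl
        · intro h; exact h.1 rfl
        · intro h; exact h.2.1 (by ring)
        · intro h; exact h.2.2.1 (by ring)
      rw [← Finset.sum_subset hsub ?_]
      · have hne1 : (0 : ZMod p) ∉ ({-d, -2 * d} : Finset (ZMod p)) := by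
          simp only [Finset.mem_insert, Finset.mem_singleton]
          push_neg
          constructor
          · intro h; exact hd (by linear_combination h)
          · intro h; exact hd2 (by linear_combination h)
        have hne2 : (-d : ZMod p) ∉ ({-2 * d} : Finset (ZMod p)) := by
          simp only [Finset.mem_singleton]
          intro h; exact hd (by linear_combination h)
        rw [Finset.sum_insert hne1, Finset.sum_insert hne2, Finset.sum_singleton]
        have c0 : χ 0 = 0 := by rw [hχdef]; exact quadraticChar_zero
        have cnd : χ (-d) = -χ d := by
          rw [show (-d : ZMod p) = -1 * d by ring, map_mul, hneg]; ring
        have c2d : χ (2 * d) = χ 2 * χ d := map_mul χ 2 d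
        have cn2d : χ (-2 * d) = -(χ 2 * χ d) := by
          rw [show (-2 * d : ZMod p) = -1 * (2 * d) by ring, map_mul, hneg, c2d]; ring
        rw [show (0 : ZMod p) + d = d by ring, show (0 : ZMod p) + 2 * d = 2 * d by ring,
          show (-d : ZMod p) + d = 0 by ring, show (-d : ZMod p) + 2 * d = d by ring,
          show (-2 * d : ZMod p) + d = -d by ring, show (-2 * d : ZMod p) + 2 * d = 0 by ring,
          c0, cnd, c2d, cn2d]
        have hu : χ d ^ 2 = 1 := quadraticChar_sq_one hd
        linear_combination (2 * χ 2 - 1) * hu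
      · intro a ha hnot
        simp only [Finset.mem_filter, Finset.mem_univ, true_and] at ha
        simp only [Finset.mem_insert, Finset.mem_singleton] at hnot
        push_neg at hnot
        obtain ⟨hn0, hnd, hn2d⟩ := hnot
        have h1 : a ≠ 0 := hn0
        have h2' : a + d ≠ 0 := fun h => hnd (by linear_combination h)
        have h3 : a + 2 * d ≠ 0 := fun h => hn2d (by linear_combination h)
        have : ¬IsSquare a ∨ ¬IsSquare (a + d) ∨ ¬IsSquare (a + 2 * d) := by tauto
        rcases this with h | h | h
        · rw [show χ a = -1 from quadraticChar_neg_one_iff_not_isSquare.mpr h]; ring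
        · rw [show χ (a + d) = -1 from quadraticChar_neg_one_iff_not_isSquare.mpr h]; ring
        · rw [show χ (a + 2 * d) = -1 from quadraticChar_neg_one_iff_not_isSquare.mpr h]; ring
  rw [hS1] at hS2
  rcases quadraticChar_dichotomy h2 with hv | hv
  · rw [hχdef] at hS2; rw [hv] at hS2
    have : 8 * (Finset.univ.filter (fun a : ZMod p =>
        a ≠ 0 ∧ a + d ≠ 0 ∧ a + 2 * d ≠ 0 ∧
        IsSquare a ∧ IsSquare (a + d) ∧ IsSquare (a + 2 * d))).card + 7 = p := by
      exact_mod_cast (by linarith :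
        (8 * ((Finset.univ.filter (fun a : ZMod p =>
          a ≠ 0 ∧ a + d ≠ 0 ∧ a + 2 * d ≠ 0 ∧
          IsSquare a ∧ IsSquare (a + d) ∧ IsSquare (a + 2 * d))).card : ℤ) + 7 : ℤ) = p)
    omega
  · rw [hχdef] at hS2; rw [hv] at hS2
    have : 8 * (Finset.univ.filter (fun a : ZMod p =>
        a ≠ 0 ∧ a + d ≠ 0 ∧ a + 2 * d ≠ 0 ∧
        IsSquare a ∧ IsSquare (a + d) ∧ IsSquare (a + 2 * d))).card + 3 = p := by
      exact_mod_cast (by linarith :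
        (8 * ((Finset.univ.filter (fun a : ZMod p =>
          a ≠ 0 ∧ a + d ≠ 0 ∧ a + 2 * d ≠ 0 ∧
          IsSquare a ∧ IsSquare (a + d) ∧ IsSquare (a + 2 * d))).card : ℤ) + 3 : ℤ) = p)
    omega
end

section
/- If p is a prime with p ≡ 3 (mod 4), then for every nonzero d ∈ Z_p, the number of a ∈ Z_p such that a, a+d, a+2d are all nonzero quadratic nonresidues modulo p is exactly ⌊(p-3)/8⌋. -/
open Finset

private lemma sum_qc_shift {F : Type*} [Field F] [Fintype F] [DecidableEq F]
    (hF : ringChar F ≠ 2) {c : F} (hc : c ≠ 0) :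
    ∑ a : F, quadraticChar F a * quadraticChar F (a + c) = -1 := by
  have h1 : ∑ a ∈ Finset.univ.erase (0:F), quadraticChar F a * quadraticChar F (a + c)
      = ∑ a : F, quadraticChar F a * quadraticChar F (a + c) := by
    apply Finset.sum_subset (Finset.subset_univ _)
    intro x _ hx
    have hx0 : x = 0 := by
      by_contra h
      exact hx (Finset.mem_erase.mpr ⟨h, Finset.mem_univ x⟩)
    simp [hx0]
  rw [← h1]
  have h2 : ∀ a ∈ Finset.univ.erase (0:F), quadraticChar F a * quadraticChar F (a + c)
      = quadraticChar F (1 + c * a⁻¹) := by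
    intro a ha
    have ha0 : a ≠ 0 := (Finset.mem_erase.mp ha).1
    have hac : a + c = a * (1 + c * a⁻¹) := by field_simp
    rw [hac, map_mul, ← mul_assoc, ← sq, quadraticChar_sq_one ha0, one_mul]
  rw [Finset.sum_congr rfl h2]
  have h3 : ∑ a ∈ Finset.univ.erase (0:F), quadraticChar F (1 + c * a⁻¹)
      = ∑ b ∈ Finset.univ.erase (1:F), quadraticChar F b := by
    apply Finset.sum_nbij' (fun a => 1 + c * a⁻¹) (fun b => c * (b - 1)⁻¹)
    · intro a ha
      have ha0 : a ≠ 0 := (Finset.mem_erase.mp ha).1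
      refine Finset.mem_erase.mpr ⟨?_, Finset.mem_univ _⟩
      intro h
      have hca : c * a⁻¹ = 0 := by
        have := add_right_cancel (a := c * a⁻¹) (b := (1:F)) (c := 0)
        have h' : c * a⁻¹ + 1 = 0 + 1 := by rw [zero_add]; linear_combination h
        exact this h'
      rcases mul_eq_zero.mp hca with h' | h'
      · exact hc h'
      · exact ha0 (inv_eq_zero.mp h')
    · intro b hb
      have hb1 : b ≠ 1 := (Finset.mem_erase.mp hb).1
      refine Finset.mem_erase.mpr ⟨?_, Finset.mem_univ _⟩
      have : b - 1 ≠ 0 := sub_ne_zero.mpr hb1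
      exact mul_ne_zero hc (inv_ne_zero this)
    · intro a ha
      have ha0 : a ≠ 0 := (Finset.mem_erase.mp ha).1
      field_simp
      simp [hc]
    · intro b hb
      have hb1 : b - 1 ≠ 0 := sub_ne_zero.mpr (Finset.mem_erase.mp hb).1
      field_simp
      ring
    · intro a _; rfl
  rw [h3]
  have h4 := Finset.add_sum_erase Finset.univ (fun b => quadraticChar F b) (Finset.mem_univ (1:F))
  rw [quadraticChar_sum_zero hF] at h4
  have h5 : quadraticChar F (1:F) = 1 := map_one _
  simp only [h5] at h4
  linarith

private lemma sum_qc_triple {F : Type*} [Field F] [Fintype F] [DecidableEq F]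
    (hneg : quadraticChar F (-1) = -1) (d : F) :
    ∑ a : F, quadraticChar F a * quadraticChar F (a + d) * quadraticChar F (a + 2*d) = 0 := by
  set χ := quadraticChar F with hχ
  have hinj : Function.Injective (fun a : F => -a - 2*d) := by
    intro x y h
    simp only at h
    linear_combination -h
  have hbij : Function.Bijective (fun a : F => -a - 2*d) :=
    Finite.injective_iff_bijective.mp hinj
  have hcomp := hbij.sum_comp (fun a => χ a * χ (a + d) * χ (a + 2*d))
  have hnegx : ∀ x : F, χ (-x) = -χ x := by
    intro x
    rw [show -x = -1 * x by ring, map_mul, hneg, neg_one_mul]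
  have key : ∀ a : F, χ (-a - 2*d) * χ (-a - 2*d + d) * χ (-a - 2*d + 2*d)
      = -(χ a * χ (a+d) * χ (a+2*d)) := by
    intro a
    rw [show -a - 2*d = -(a + 2*d) by ring, show -(a+2*d) + d = -(a + d) by ring,
        show -(a+2*d) + 2*d = -a by ring, hnegx, hnegx, hnegx]
    ring
  rw [Finset.sum_congr rfl (fun a _ => key a), Finset.sum_neg_distrib] at hcomp
  linarith

theorem three_ap_nonresidues_count (p : ℕ) [Fact p.Prime] (hp : p % 4 = 3)
    (d : ZMod p) (hd : d ≠ 0) :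
    (Finset.univ.filter (fun a : ZMod p =>
      a ≠ 0 ∧ a + d ≠ 0 ∧ a + 2 * d ≠ 0 ∧
      ¬ IsSquare a ∧ ¬ IsSquare (a + d) ∧ ¬ IsSquare (a + 2 * d))).card = (p - 3) / 8 := by
  suffices h : ∀ S : Finset (ZMod p), (∀ a, a ∈ S ↔ (a ≠ 0 ∧ a + d ≠ 0 ∧ a + 2*d ≠ 0 ∧
      ¬IsSquare a ∧ ¬IsSquare (a+d) ∧ ¬IsSquare (a+2*d))) → S.card = (p-3)/8 by
    exact h _ (fun a => by simp)
  intro S hSmem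
  have hp2 : p ≠ 2 := by omega
  have hF : ringChar (ZMod p) ≠ 2 := by rw [ZMod.ringChar_zmod_n]; exact_mod_cast hp2
  set χ := quadraticChar (ZMod p) with hχdef
  have h2 : (2 : ZMod p) ≠ 0 := Ring.two_ne_zero hF
  have h2d : (2 : ZMod p) * d ≠ 0 := mul_ne_zero h2 hd
  have hχneg : χ (-1) = -1 := by
    rw [hχdef, quadraticChar_neg_one hF, ZMod.card, ZMod.χ₄_nat_three_mod_four hp]
  have hnegx : ∀ x : ZMod p, χ (-x) = -χ x := by
    intro x
    rw [show -x = -1 * x by ring, map_mul, hχneg, neg_one_mul]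
  set f : ZMod p → ℤ := fun a => (1 - χ a) * (1 - χ (a + d)) * (1 - χ (a + 2*d)) with hfdef
  -- Step A : total sum
  have hA : ∑ a : ZMod p, f a = (p : ℤ) - 3 := by
    have e1 : ∑ a : ZMod p, χ a = 0 := quadraticChar_sum_zero hF
    have e2 : ∑ a : ZMod p, χ (a + d) = 0 := by
      have := Equiv.sum_comp (Equiv.addRight d) (fun b => χ b)
      simp only [Equiv.coe_addRight] at this
      rw [this, e1]
    have e3 : ∑ a : ZMod p, χ (a + 2*d) = 0 := by
      have := Equiv.sum_comp (Equiv.addRight (2*d)) (fun b => χ b)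
      simp only [Equiv.coe_addRight] at this
      rw [this, e1]
    have e4 : ∑ a : ZMod p, χ a * χ (a + d) = -1 := sum_qc_shift hF hd
    have e5 : ∑ a : ZMod p, χ a * χ (a + 2*d) = -1 := sum_qc_shift hF h2d
    have e6 : ∑ a : ZMod p, χ (a + d) * χ (a + 2*d) = -1 := by
      have hb := Equiv.sum_comp (Equiv.addRight d) (fun b => χ b * χ (b + d))
      simp only [Equiv.coe_addRight] at hb
      calc ∑ a : ZMod p, χ (a + d) * χ (a + 2*d)
          = ∑ a : ZMod p, χ (a + d) * χ ((a + d) + d) :=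
            Finset.sum_congr rfl (fun a _ => by rw [show a + 2*d = a + d + d by ring])
        _ = ∑ b : ZMod p, χ b * χ (b + d) := hb
        _ = -1 := e4
    have e7 : ∑ a : ZMod p, χ a * χ (a + d) * χ (a + 2*d) = 0 := sum_qc_triple hχneg d
    have hcard : ∑ _a : ZMod p, (1 : ℤ) = (p : ℤ) := by
      rw [Finset.sum_const, Finset.card_univ, ZMod.card]
      simp
    calc ∑ a : ZMod p, f a
        = ∑ a : ZMod p, ((1:ℤ) - χ a - χ (a+d) - χ (a+2*d) + χ a * χ (a+d)
            + χ a * χ (a+2*d) + χ (a+d) * χ (a+2*d) - χ a * χ (a+d) * χ (a+2*d)) :=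
          Finset.sum_congr rfl (fun a _ => by simp only [hfdef]; ring)
      _ = (p:ℤ) - 3 := by
          simp only [Finset.sum_add_distrib, Finset.sum_sub_distrib]
          rw [e1, e2, e3, e4, e5, e6, e7, hcard]
          ring
  -- Step B : sum as 8 * card + boundary
  classical
  set B : Finset (ZMod p) := {0, -d, -(2*d)} with hBdef
  have hmemB : ∀ a : ZMod p, a ∈ B ↔ (a = 0 ∨ a = -d ∨ a = -(2*d)) := by
    intro a; simp [hBdef]
  have hdisj : Disjoint S B := by
    rw [Finset.disjoint_left]
    intro a haS haB
    obtain ⟨h0, h1', h2', _⟩ := (hSmem a).mp haS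
    rcases (hmemB a).mp haB with h | h | h
    · exact h0 h
    · exact h1' (by rw [h]; ring)
    · exact h2' (by rw [h]; ring)
  have hzero : ∀ a ∈ Finset.univ, a ∉ S ∪ B → f a = 0 := by
    intro a _ ha
    rw [Finset.mem_union, not_or] at ha
    obtain ⟨haS, haB⟩ := ha
    rw [hmemB] at haB
    push_neg at haB
    obtain ⟨hb0, hb1, hb2⟩ := haB
    have had : a + d ≠ 0 := fun h => hb1 (by linear_combination h)
    have ha2d : a + 2*d ≠ 0 := fun h => hb2 (by linear_combination h)
    by_cases hsa : IsSquare a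
    · have hca : χ a = 1 := (quadraticChar_one_iff_isSquare hb0).mpr hsa
      simp [hfdef, hca]
    by_cases hsb : IsSquare (a + d)
    · have hcb : χ (a + d) = 1 := (quadraticChar_one_iff_isSquare had).mpr hsb
      simp [hfdef, hcb]
    by_cases hsc : IsSquare (a + 2*d)
    · have hcc : χ (a + 2*d) = 1 := (quadraticChar_one_iff_isSquare ha2d).mpr hsc
      simp [hfdef, hcc]
    · exact absurd ((hSmem a).mpr ⟨hb0, had, ha2d, hsa, hsb, hsc⟩) haS
  have hfS : ∀ a ∈ S, f a = 8 := by
    intro a haS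
    obtain ⟨h0, h1', h2', hs0, hs1, hs2⟩ := (hSmem a).mp haS
    have c0 : χ a = -1 := quadraticChar_neg_one_iff_not_isSquare.mpr hs0
    have c1 : χ (a + d) = -1 := quadraticChar_neg_one_iff_not_isSquare.mpr hs1
    have c2 : χ (a + 2*d) = -1 := quadraticChar_neg_one_iff_not_isSquare.mpr hs2
    simp only [hfdef, c0, c1, c2]
    norm_num
  have hu : χ d * χ d = 1 := by
    have := quadraticChar_sq_one (F := ZMod p) hd
    rwa [sq] at this
  have hBsum : ∑ a ∈ B, f a = 2 + 2 * χ 2 := by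
    have h0d : (0 : ZMod p) ≠ -d := fun h => hd (by linear_combination h)
    have h02d : (0 : ZMod p) ≠ -(2*d) := fun h => h2d (by linear_combination h)
    have hd2d : (-d : ZMod p) ≠ -(2*d) := fun h => hd (by linear_combination h)
    have hz : χ (0 : ZMod p) = 0 := quadraticChar_zero
    have v0 : f 0 = (1 - χ d) * (1 - χ 2 * χ d) := by
      simp only [hfdef]
      rw [show (0:ZMod p) + d = d by ring, show (0:ZMod p) + 2*d = 2*d by ring, hz,
        map_mul]
      ring
    have v1 : f (-d) = (1 + χ d) * (1 - χ d) := by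
      simp only [hfdef]
      rw [show (-d:ZMod p) + d = 0 by ring, show (-d:ZMod p) + 2*d = d by ring, hz,
        hnegx]
      ring
    have v2 : f (-(2*d)) = (1 + χ 2 * χ d) * (1 + χ d) := by
      simp only [hfdef]
      rw [show (-(2*d):ZMod p) + d = -d by ring, show (-(2*d):ZMod p) + 2*d = 0 by ring, hz,
        hnegx, hnegx, map_mul]
      ring
    rw [hBdef, Finset.sum_insert (by simp [h0d, h02d]),
        Finset.sum_insert (by simp [hd2d]), Finset.sum_singleton, v0, v1, v2]
    linear_combination (2 * χ 2 - 1) * hu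
  have hS8 : ∑ a ∈ S, f a = (S.card : ℤ) * 8 := by
    rw [Finset.sum_congr rfl hfS, Finset.sum_const, nsmul_eq_mul]
  have hunion : ∑ a : ZMod p, f a = ∑ a ∈ S ∪ B, f a :=
    (Finset.sum_subset (Finset.subset_univ _) hzero).symm
  rw [Finset.sum_union hdisj, hS8, hBsum, hA] at hunion
  rcases quadraticChar_dichotomy h2 with hc | hc
  · rw [hc] at hunion
    have hnat : p = 8 * S.card + 7 := by
      have : (p:ℤ) = ((8 * S.card + 7 : ℕ) : ℤ) := by push_cast; linarith
      exact_mod_cast this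
    omega
  · rw [hc] at hunion
    have hnat : p = 8 * S.card + 3 := by
      have : (p:ℤ) = ((8 * S.card + 3 : ℕ) : ℤ) := by push_cast; linarith
      exact_mod_cast this
    omega
end

section
/- If p is a prime with p ≡ 3 (mod 4), then the number of a ∈ Z_p such that a, a+1, a+2 are all nonzero, with a and a+1 quadratic residues and a+2 a quadratic nonresidue modulo p, is exactly ⌈(p-3)/8⌉. -/
open Finset

section aux

variable {p : ℕ} [Fact p.Prime]

private lemma chi_shift_sum (hc : ringChar (ZMod p) ≠ 2) {b : ZMod p} (hb : b ≠ 0) :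
    ∑ a : ZMod p, quadraticChar (ZMod p) (a * (a + b)) = -1 := by
  have h0 : ∑ a : ZMod p, quadraticChar (ZMod p) (a * (a + b))
      = quadraticChar (ZMod p) ((0 : ZMod p) * (0 + b))
        + ∑ a ∈ univ.erase (0 : ZMod p), quadraticChar (ZMod p) (a * (a + b)) :=
    (Finset.add_sum_erase _ _ (mem_univ (0 : ZMod p))).symm
  rw [h0, show (0 : ZMod p) * (0 + b) = 0 by ring, quadraticChar_zero, zero_add]
  have hstep : ∑ a ∈ univ.erase (0 : ZMod p), quadraticChar (ZMod p) (a * (a + b))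
      = ∑ t ∈ univ.erase (1 : ZMod p), quadraticChar (ZMod p) t := by
    refine Finset.sum_nbij' (fun a => 1 + b * a⁻¹) (fun t => b * (t - 1)⁻¹) ?_ ?_ ?_ ?_ ?_
    · intro a ha
      simp only [mem_erase, mem_univ, and_true] at ha ⊢
      intro h
      have hba : b * a⁻¹ = 0 := by linear_combination h
      rcases mul_eq_zero.mp hba with h' | h'
      · exact hb h'
      · exact ha (by simpa using inv_eq_zero.mp h')
    · intro t ht
      simp only [mem_erase, mem_univ, and_true] at ht ⊢
      have ht1 : t - 1 ≠ 0 := sub_ne_zero.mpr ht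
      exact mul_ne_zero hb (inv_ne_zero ht1)
    · intro a ha
      simp only [mem_erase, mem_univ, and_true] at ha
      have hba : b * a⁻¹ ≠ 0 := mul_ne_zero hb (inv_ne_zero ha)
      field_simp
      rw [add_sub_cancel_left, div_self hb]
    · intro t ht
      simp only [mem_erase, mem_univ, and_true] at ht
      have ht1 : t - 1 ≠ 0 := sub_ne_zero.mpr ht
      field_simp
      ring
    · intro a ha
      simp only [mem_erase, mem_univ, and_true] at ha
      have key : a * (a + b) = a ^ 2 * (1 + b * a⁻¹) := by
        field_simp
      rw [key, map_mul, quadraticChar_sq_one' ha, one_mul]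
  rw [hstep]
  have h1 := Finset.add_sum_erase univ (quadraticChar (ZMod p)) (mem_univ (1 : ZMod p))
  rw [quadraticChar_sum_zero hc, map_one] at h1
  linarith

end aux

theorem pattern_rrn_count (p : ℕ) [Fact p.Prime] (hp : p % 4 = 3) :
    (Finset.univ.filter (fun a : ZMod p =>
      a ≠ 0 ∧ a + 1 ≠ 0 ∧ a + 2 ≠ 0 ∧
      IsSquare a ∧ IsSquare (a + 1) ∧ ¬ IsSquare (a + 2))).card = (p + 4) / 8 := by
  have hprime := (Fact.out : p.Prime)
  have hp3 : 3 ≤ p := by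
    rcases Nat.lt_or_ge p 3 with h | h
    · interval_cases p <;> omega
    · exact h
  have hc : ringChar (ZMod p) ≠ 2 := by
    rw [ZMod.ringChar_zmod_n]; omega
  set χ := quadraticChar (ZMod p) with hχ
  have hχm1 : χ (-1) = -1 := by
    rw [hχ, quadraticChar_neg_one_iff_not_isSquare, ZMod.exists_sq_eq_neg_one_iff]
    simp [hp]
  have h2ne : (2 : ZMod p) ≠ 0 := by
    intro h
    have h2 : ((2 : ℕ) : ZMod p) = 0 := by exact_mod_cast h
    rw [ZMod.natCast_eq_zero_iff] at h2
    have := Nat.le_of_dvd (by norm_num) h2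
    omega
  have h1ne : (1 : ZMod p) ≠ 0 := one_ne_zero
  have hS1 : ∑ a : ZMod p, χ (a * (a + 1)) = -1 := chi_shift_sum hc h1ne
  have hS2 : ∑ a : ZMod p, χ (a * (a + 2)) = -1 := chi_shift_sum hc h2ne
  have hS1' : ∑ a : ZMod p, χ ((a + 1) * (a + 2)) = -1 := by
    rw [← hS1]
    refine Fintype.sum_equiv (Equiv.addRight (1 : ZMod p))
      (fun a => χ ((a + 1) * (a + 2))) (fun a => χ (a * (a + 1))) (fun a => ?_)
    show χ ((a + 1) * (a + 2)) = χ ((a + 1) * (a + 1 + 1))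
    congr 1
    ring
  have hT : ∑ a : ZMod p, χ (a * (a + 1) * (a + 2)) = 0 := by
    have key : ∑ a : ZMod p, χ (a * (a + 1) * (a + 2))
        = - ∑ a : ZMod p, χ (a * (a + 1) * (a + 2)) := by
      calc ∑ a : ZMod p, χ (a * (a + 1) * (a + 2))
          = ∑ a : ZMod p, χ ((-a - 2) * ((-a - 2) + 1) * ((-a - 2) + 2)) := by
            refine Fintype.sum_equiv
              ⟨fun a => -a - 2, fun a => -a - 2, fun a => by ring, fun a => by ring⟩
              _ _ (fun a => ?_)
            show χ (a * (a + 1) * (a + 2))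
              = χ ((-(-a - 2) - 2) * ((-(-a - 2) - 2) + 1) * ((-(-a - 2) - 2) + 2))
            congr 1
            ring
        _ = ∑ a : ZMod p, χ ((-1) * (a * (a + 1) * (a + 2))) := by
            apply Finset.sum_congr rfl
            intro a _
            rw [show (-a - 2) * ((-a - 2) + 1) * ((-a - 2) + 2)
              = (-1) * (a * (a + 1) * (a + 2)) from by ring]
        _ = - ∑ a : ZMod p, χ (a * (a + 1) * (a + 2)) := by
            simp only [map_mul, hχm1]
            simp only [neg_one_mul]
            exact Finset.sum_neg_distrib (f := fun a : ZMod p => χ a * χ (a + 1) * χ (a + 2))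
    linarith
  have hsum0 : ∑ a : ZMod p, χ a = 0 := quadraticChar_sum_zero hc
  have hsum1 : ∑ a : ZMod p, χ (a + 1) = 0 := by
    rw [← hsum0]
    exact Fintype.sum_equiv (Equiv.addRight (1 : ZMod p)) _ _ (fun a => rfl)
  have hsum2 : ∑ a : ZMod p, χ (a + 2) = 0 := by
    rw [← hsum0]
    exact Fintype.sum_equiv (Equiv.addRight (2 : ZMod p)) _ _ (fun a => rfl)
  set P : ZMod p → Prop := fun a =>
    a ≠ 0 ∧ a + 1 ≠ 0 ∧ a + 2 ≠ 0 ∧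
      IsSquare a ∧ IsSquare (a + 1) ∧ ¬ IsSquare (a + 2) with hP
  show (univ.filter P).card = (p + 4) / 8
  set f : ZMod p → ℤ := fun a => (1 + χ a) * (1 + χ (a + 1)) * (1 - χ (a + 2)) with hf
  have htot : ∑ a : ZMod p, f a = (p : ℤ) + 1 := by
    have expand : ∀ a : ZMod p, f a =
        1 + χ a + χ (a + 1) - χ (a + 2) + χ (a * (a + 1)) - χ (a * (a + 2))
          - χ ((a + 1) * (a + 2)) - χ (a * (a + 1) * (a + 2)) := by
      intro a
      simp only [hf, map_mul]
      ring
    rw [Finset.sum_congr rfl (fun a _ => expand a)]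
    simp only [Finset.sum_add_distrib, Finset.sum_sub_distrib, Finset.sum_const,
      Finset.card_univ, ZMod.card, nsmul_eq_mul, mul_one]
    rw [hsum0, hsum1, hsum2, hS1, hS2, hS1', hT]
    ring
  have hfilt : ∑ a ∈ univ.filter P, f a = 8 * ((univ.filter P).card : ℤ) := by
    have h8 : ∀ a ∈ univ.filter P, f a = 8 := by
      intro a ha
      simp only [mem_filter, mem_univ, true_and, hP] at ha
      obtain ⟨h0, h1, h2, hs0, hs1, hs2⟩ := ha
      have c0 : χ a = 1 := (quadraticChar_one_iff_isSquare h0).mpr hs0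
      have c1 : χ (a + 1) = 1 := (quadraticChar_one_iff_isSquare h1).mpr hs1
      have c2 : χ (a + 2) = -1 := quadraticChar_neg_one_iff_not_isSquare.mpr hs2
      simp only [hf, c0, c1, c2]
      norm_num
    rw [Finset.sum_congr rfl h8, Finset.sum_const, nsmul_eq_mul]
    ring
  have hnfilt : ∑ a ∈ univ.filter (fun a => ¬ P a), f a = 2 - 2 * χ 2 := by
    have h0mem : (0 : ZMod p) ∈ univ.filter (fun a => ¬ P a) := by
      simp [hP]
    rw [Finset.sum_eq_single_of_mem 0 h0mem ?_]
    · simp only [hf, zero_add]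
      rw [show χ (0 : ZMod p) = 0 from quadraticChar_zero,
        show χ (1 : ZMod p) = 1 from map_one χ]
      ring
    · intro a ha hane
      simp only [mem_filter, mem_univ, true_and, hP] at ha
      push_neg at ha
      simp only [hf]
      by_cases h1 : a + 1 = 0
      · have ha1 : a = -1 := by linear_combination h1
        rw [ha1, hχm1]
        ring
      by_cases h2 : a + 2 = 0
      · have ha2 : a + 1 = -1 := by linear_combination h2
        rw [ha2, hχm1]
        ring
      obtain hcase := ha hane h1 h2
      by_cases hs0 : IsSquare a
      · by_cases hs1 : IsSquare (a + 1)
        · have hs2 := hcase hs0 hs1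
          have c2 : χ (a + 2) = 1 := (quadraticChar_one_iff_isSquare h2).mpr hs2
          rw [c2]
          ring
        · have c1 : χ (a + 1) = -1 := quadraticChar_neg_one_iff_not_isSquare.mpr hs1
          rw [c1]
          ring
      · have c0 : χ a = -1 := quadraticChar_neg_one_iff_not_isSquare.mpr hs0
        rw [c0]
        ring
  have hsplit := Finset.sum_filter_add_sum_filter_not univ P f
  have key : 8 * ((univ.filter P).card : ℤ) = (p : ℤ) - 1 + 2 * χ 2 := by
    rw [hfilt, hnfilt, htot] at hsplit
    linarith
  rcases quadraticChar_dichotomy h2ne with h | h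
  · rw [show χ (2 : ZMod p) = 1 from h] at key
    have h8 : 8 * ((univ.filter P).card : ℤ) = (p : ℤ) + 1 := by linarith
    have hnat : 8 * (univ.filter P).card = p + 1 := by exact_mod_cast h8
    omega
  · rw [show χ (2 : ZMod p) = -1 from h] at key
    have h8 : ((univ.filter P).card : ℤ) * 8 + 3 = (p : ℤ) := by linarith
    have hnat : (univ.filter P).card * 8 + 3 = p := by exact_mod_cast h8
    omega
end

section
/- If p is a prime with p ≡ 3 (mod 4), then for every pattern ε : {0,1,2} → {residue, nonresidue}, the number of a ∈ Z_p such that a, a+1, a+2 are all nonzero and a+i has quadratic character ε(i) for i = 0,1,2 is either ⌊(p-3)/8⌋ or ⌈(p-3)/8⌉. -/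
open Finset

variable {F : Type*} [Field F] [Fintype F] [DecidableEq F]

lemma sumχ_shift (hF : ringChar F ≠ 2) (c : F) :
    ∑ a : F, quadraticChar F (a + c) = 0 := by
  rw [Fintype.sum_equiv (Equiv.addRight c) (fun a => quadraticChar F (a + c))
    (fun a => quadraticChar F a) (fun a => rfl)]
  exact quadraticChar_sum_zero hF

lemma sumχ_pair (hF : ringChar F ≠ 2) {b : F} (hb : b ≠ 0) :
    ∑ a : F, quadraticChar F a * quadraticChar F (a + b) = -1 := by
  set χ := quadraticChar F with hχ
  have h0 : (fun a => χ a * χ (a + b)) (0 : F) = 0 := by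
    simp only [hχ, quadraticChar_zero, zero_mul]
  rw [← Finset.sum_erase (f := fun a => χ a * χ (a + b)) (a := (0:F)) Finset.univ h0]
  have hstep : ∀ a ∈ Finset.univ.erase (0 : F), χ a * χ (a + b) = χ (1 + b * a⁻¹) := by
    intro a ha
    have ha0 : a ≠ 0 := Finset.ne_of_mem_erase ha
    have h1 : (1 : F) + b * a⁻¹ = a⁻¹ * (a + b) := by field_simp
    rw [h1, map_mul]
    have : χ a⁻¹ = χ a := by
      have hinv : χ a * χ a⁻¹ = 1 := by
        rw [← map_mul, mul_inv_cancel₀ ha0, map_one]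
      rcases quadraticChar_dichotomy ha0 with h | h <;> rw [h] at hinv ⊢
      all_goals linarith
    rw [this]
  rw [Finset.sum_congr rfl hstep]
  have hbij : ∑ a ∈ Finset.univ.erase (0 : F), χ (1 + b * a⁻¹)
      = ∑ u ∈ Finset.univ.erase (1 : F), χ u := by
    apply Finset.sum_nbij' (fun a => 1 + b * a⁻¹) (fun u => b * (u - 1)⁻¹)
    · intro a ha
      have ha0 : a ≠ 0 := Finset.ne_of_mem_erase ha
      simp only [Finset.mem_erase, Finset.mem_univ, and_true]
      intro h
      have : b * a⁻¹ = 0 := by linear_combination h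
      rcases mul_eq_zero.mp this with h' | h'
      · exact hb h'
      · exact ha0 (inv_eq_zero.mp h')
    · intro u hu
      have hu1 : u ≠ 1 := Finset.ne_of_mem_erase hu
      simp only [Finset.mem_erase, Finset.mem_univ, and_true]
      intro h
      rcases mul_eq_zero.mp h with h' | h'
      · exact hb h'
      · exact hu1 (by have := inv_eq_zero.mp h'; linear_combination this)
    · intro a ha
      have ha0 : a ≠ 0 := Finset.ne_of_mem_erase ha
      field_simp
      try ring
      exact mul_inv_cancel₀ hb
    · intro u hu
      have hu1 : u ≠ 1 := Finset.ne_of_mem_erase hu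
      have : u - 1 ≠ 0 := sub_ne_zero.mpr hu1
      field_simp
      try ring
    · intro a ha; rfl
  rw [hbij]
  have htot := Finset.add_sum_erase Finset.univ (fun u => χ u) (Finset.mem_univ (1 : F))
  have hz : ∑ u : F, χ u = 0 := quadraticChar_sum_zero hF
  have h1 : (1:ℤ) + ∑ u ∈ Finset.univ.erase (1:F), χ u = 0 := by simpa [hz] using htot
  linarith

lemma sumχ_triple (hneg : quadraticChar F (-1) = -1) :
    ∑ a : F, quadraticChar F a * quadraticChar F (a+1) * quadraticChar F (a+2) = 0 := by
  set χ := quadraticChar F with hχ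
  have key : ∀ a : F, -(χ a * χ (a+1) * χ (a+2))
      = χ (-2 - a) * χ (-2 - a + 1) * χ (-2 - a + 2) := by
    intro a
    have h0 : (-2 - a : F) = -1 * (a + 2) := by ring
    have h1 : (-2 - a + 1 : F) = -1 * (a + 1) := by ring
    have h2 : (-2 - a + 2 : F) = -1 * a := by ring
    rw [h2, h1, h0, hχ, map_mul, map_mul, map_mul, ← hχ, hneg]
    ring
  have h := Fintype.sum_equiv (Equiv.subLeft (-2 : F))
      (fun a => -(χ a * χ (a+1) * χ (a+2)))
      (fun a => χ a * χ (a+1) * χ (a+2))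
      (fun a => by simpa [Equiv.subLeft_apply] using key a)
  rw [Finset.sum_neg_distrib] at h
  linarith

lemma zmod3_consec : ∀ a : ZMod 3, ∃ i : Fin 3, a + ((i : ℕ) : ZMod 3) = 0 := by decide

theorem pattern_length_three_count (p : ℕ) [Fact p.Prime] (hp : p % 4 = 3)
    (ε : Fin 3 → Bool) :
    let N := (Finset.univ.filter (fun a : ZMod p =>
      ∀ i : Fin 3, a + (i : ℕ) ≠ 0 ∧ (IsSquare (a + (i : ℕ)) ↔ ε i = true))).card
    N = (p - 3) / 8 ∨ N = (p + 4) / 8 := by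
  classical
  intro N
  by_cases hp3 : p = 3
  · subst hp3
    have hN0 : N = 0 := by
      rw [show N = (Finset.univ.filter (fun a : ZMod 3 =>
        ∀ i : Fin 3, a + (i : ℕ) ≠ 0 ∧ (IsSquare (a + (i : ℕ)) ↔ ε i = true))).card from rfl,
        Finset.card_eq_zero, Finset.filter_eq_empty_iff]
      intro a _
      obtain ⟨i, hi⟩ := zmod3_consec a
      intro h'
      exact (h' i).1 hi
    left; omega
  · have hp7 : 7 ≤ p := by omega
    set χ := quadraticChar (ZMod p) with hχdef
    have hchar : ringChar (ZMod p) ≠ 2 := by rw [ZMod.ringChar_zmod_n]; omega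
    have hneg1 : χ (-1) = -1 := quadraticChar_neg_one_iff_not_isSquare.mpr
      (by rw [ZMod.exists_sq_eq_neg_one_iff]; simp [hp])
    have h1ne : (1 : ZMod p) ≠ 0 := one_ne_zero
    have h2ne : (2 : ZMod p) ≠ 0 := by
      intro h
      have h' : ((2 : ℕ) : ZMod p) = 0 := by exact_mod_cast h
      rw [ZMod.natCast_eq_zero_iff] at h'
      have := Nat.le_of_dvd (by norm_num) h'
      omega
    set e : Fin 3 → ℤ := fun i => if ε i then 1 else -1 with hedef
    set S : Finset (ZMod p) :=
      Finset.univ.filter (fun a => a ≠ 0 ∧ a + 1 ≠ 0 ∧ a + 2 ≠ 0) with hSdef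
    set f : ZMod p → ℤ :=
      fun a => (1 + e 0 * χ a) * (1 + e 1 * χ (a+1)) * (1 + e 2 * χ (a+2)) with hfdef
    have hNcard : N = (S.filter (fun a => (IsSquare a ↔ ε 0 = true) ∧
        (IsSquare (a+1) ↔ ε 1 = true) ∧ (IsSquare (a+2) ↔ ε 2 = true))).card := by
      rw [show N = (Finset.univ.filter (fun a : ZMod p =>
        ∀ i : Fin 3, a + (i : ℕ) ≠ 0 ∧ (IsSquare (a + (i : ℕ)) ↔ ε i = true))).card from rfl,
        hSdef, Finset.filter_filter]
      congr 1
      apply Finset.filter_congr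
      intro a _
      have c0 : ((0 : Fin 3) : ℕ) = 0 := rfl
      have c1 : ((1 : Fin 3) : ℕ) = 1 := rfl
      have c2 : ((2 : Fin 3) : ℕ) = 2 := rfl
      constructor
      · intro h
        have H0 := h 0; have H1 := h 1; have H2 := h 2
        rw [c0] at H0; rw [c1] at H1; rw [c2] at H2
        push_cast at H0 H1 H2
        rw [add_zero] at H0
        exact ⟨⟨H0.1, H1.1, H2.1⟩, H0.2, H1.2, H2.2⟩
      · rintro ⟨⟨hz0, hz1, hz2⟩, hq0, hq1, hq2⟩ i
        fin_cases i <;> (try push_cast) <;> (try simp only [add_zero]) <;> tauto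
    have factor : ∀ (b : ZMod p), b ≠ 0 → ∀ (t : Bool),
        (1 + (if t then (1:ℤ) else -1) * χ b) = if (IsSquare b ↔ t = true) then 2 else 0 := by
      intro b hb t
      rcases quadraticChar_dichotomy hb with h | h
      · have hsq : IsSquare b := (quadraticChar_one_iff_isSquare hb).mp h
        rw [hχdef] at *
        cases t <;> norm_num [h, hsq]
      · have hsq : ¬ IsSquare b := quadraticChar_neg_one_iff_not_isSquare.mp h
        rw [hχdef] at *
        cases t <;> norm_num [h, hsq]
    have hprod : ∀ a ∈ S, f a = if ((IsSquare a ↔ ε 0 = true) ∧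
        (IsSquare (a+1) ↔ ε 1 = true) ∧ (IsSquare (a+2) ↔ ε 2 = true)) then 8 else 0 := by
      intro a ha
      rw [hSdef, Finset.mem_filter] at ha
      obtain ⟨-, ha0, ha1, ha2⟩ := ha
      show (1 + e 0 * χ a) * (1 + e 1 * χ (a+1)) * (1 + e 2 * χ (a+2)) = _
      rw [show e 0 = if ε 0 then (1:ℤ) else -1 from rfl,
          show e 1 = if ε 1 then (1:ℤ) else -1 from rfl,
          show e 2 = if ε 2 then (1:ℤ) else -1 from rfl,
          factor a ha0 (ε 0), factor (a+1) ha1 (ε 1), factor (a+2) ha2 (ε 2)]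
      by_cases d0 : (IsSquare a ↔ ε 0 = true) <;> by_cases d1 : (IsSquare (a+1) ↔ ε 1 = true) <;>
        by_cases d2 : (IsSquare (a+2) ↔ ε 2 = true) <;> simp [d0, d1, d2]
    have hsum8 : ∑ a ∈ S, f a = 8 * (N : ℤ) := by
      rw [Finset.sum_congr rfl hprod, ← Finset.sum_filter, Finset.sum_const, hNcard]
      push_cast
      ring
    have hL0 : ∑ a : ZMod p, χ a = 0 := quadraticChar_sum_zero hchar
    have hL1 : ∑ a : ZMod p, χ (a + 1) = 0 := sumχ_shift hchar 1
    have hL2 : ∑ a : ZMod p, χ (a + 2) = 0 := sumχ_shift hchar 2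
    have hP01 : ∑ a : ZMod p, χ a * χ (a + 1) = -1 := sumχ_pair hchar h1ne
    have hP02 : ∑ a : ZMod p, χ a * χ (a + 2) = -1 := sumχ_pair hchar h2ne
    have hP12 : ∑ a : ZMod p, χ (a + 1) * χ (a + 2) = -1 := by
      rw [Fintype.sum_equiv (Equiv.addRight (1 : ZMod p))
        (fun a => χ (a + 1) * χ (a + 2)) (fun a => χ a * χ (a + 1))
        (fun a => by
          show χ (a + 1) * χ (a + 2) = χ (a + 1) * χ (a + 1 + 1)
          rw [show a + 1 + 1 = a + 2 by ring])]
      exact sumχ_pair hchar h1ne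
    have hT : ∑ a : ZMod p, χ a * χ (a + 1) * χ (a + 2) = 0 := sumχ_triple hneg1
    have huniv : ∑ a : ZMod p, f a
        = (p : ℤ) - (e 0 * e 1 + e 0 * e 2 + e 1 * e 2) := by
      have expand : ∀ a : ZMod p, f a = 1 + e 0 * χ a + e 1 * χ (a+1) + e 2 * χ (a+2)
          + (e 0 * e 1) * (χ a * χ (a+1)) + (e 0 * e 2) * (χ a * χ (a+2))
          + (e 1 * e 2) * (χ (a+1) * χ (a+2))
          + (e 0 * e 1 * e 2) * (χ a * χ (a+1) * χ (a+2)) := by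
        intro a
        show (1 + e 0 * χ a) * (1 + e 1 * χ (a+1)) * (1 + e 2 * χ (a+2)) = _
        ring
      rw [Finset.sum_congr rfl (fun a _ => expand a)]
      rw [Finset.sum_add_distrib, Finset.sum_add_distrib, Finset.sum_add_distrib,
          Finset.sum_add_distrib, Finset.sum_add_distrib, Finset.sum_add_distrib,
          Finset.sum_add_distrib, ← Finset.mul_sum, ← Finset.mul_sum, ← Finset.mul_sum,
          ← Finset.mul_sum, ← Finset.mul_sum, ← Finset.mul_sum, ← Finset.mul_sum,
          hL0, hL1, hL2, hP01, hP02, hP12, hT, Finset.sum_const, Finset.card_univ, ZMod.card]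
      push_cast
      ring
    have hne01 : (0 : ZMod p) ≠ -1 := fun h => h1ne (by linear_combination h)
    have hne02 : (0 : ZMod p) ≠ -2 := fun h => h2ne (by linear_combination h)
    have hne12 : (-1 : ZMod p) ≠ -2 := fun h => h1ne (by linear_combination h)
    have hSset : S = Finset.univ \ {0, -1, -2} := by
      ext a
      simp only [hSdef, Finset.mem_filter, Finset.mem_univ, true_and, Finset.mem_sdiff,
        Finset.mem_insert, Finset.mem_singleton, not_or]
      constructor
      · rintro ⟨h0, h1, h2⟩
        exact ⟨h0, fun h => h1 (by rw [h]; ring), fun h => h2 (by rw [h]; ring)⟩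
      · rintro ⟨h0, h1, h2⟩
        exact ⟨h0, fun h => h1 (by linear_combination h), fun h => h2 (by linear_combination h)⟩
    have hSsum : ∑ a ∈ S, f a = (∑ a : ZMod p, f a) - (f 0 + f (-1) + f (-2)) := by
      rw [hSset, Finset.sum_sdiff_eq_sub (Finset.subset_univ _)]
      congr 1
      rw [Finset.sum_insert (by simp [hne01, hne02]),
          Finset.sum_insert (by simp [hne12]), Finset.sum_singleton]
      ring
    have hχ1 : χ (1 : ZMod p) = 1 := map_one χ
    have hχ0 : χ (0 : ZMod p) = 0 := by rw [hχdef]; exact quadraticChar_zero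
    have hχm2 : χ (-2 : ZMod p) = - χ 2 := by
      rw [show (-2 : ZMod p) = -1 * 2 by ring, map_mul, hneg1]; ring
    have hf0 : f 0 = (1 + e 1) * (1 + e 2 * χ 2) := by
      show (1 + e 0 * χ 0) * (1 + e 1 * χ (0+1)) * (1 + e 2 * χ (0+2)) = _
      rw [show (0 : ZMod p) + 1 = 1 by ring, show (0 : ZMod p) + 2 = 2 by ring, hχ1, hχ0]
      ring
    have hfm1 : f (-1) = (1 - e 0) * (1 + e 2) := by
      show (1 + e 0 * χ (-1)) * (1 + e 1 * χ (-1+1)) * (1 + e 2 * χ (-1+2)) = _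
      rw [show (-1 : ZMod p) + 1 = 0 by ring, show (-1 : ZMod p) + 2 = 1 by ring,
        hχ1, hχ0, hneg1]
      ring
    have hfm2 : f (-2) = (1 - e 0 * χ 2) * (1 - e 1) := by
      show (1 + e 0 * χ (-2)) * (1 + e 1 * χ (-2+1)) * (1 + e 2 * χ (-2+2)) = _
      rw [show (-2 : ZMod p) + 1 = -1 by ring, show (-2 : ZMod p) + 2 = 0 by ring,
        hχ0, hneg1, hχm2]
      ring
    have hmain : 8 * (N : ℤ)
        = (p : ℤ) - 3 + (1 + χ 2) * (e 0 - e 2 - e 0 * e 1 - e 1 * e 2) := by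
      rw [← hsum8, hSsum, huniv, hf0, hfm1, hfm2]; ring
    have hs : χ 2 = 1 ∨ χ 2 = -1 := by rw [hχdef]; exact quadraticChar_dichotomy h2ne
    have he0 : e 0 = 1 ∨ e 0 = -1 := by
      rw [show e 0 = if ε 0 then (1:ℤ) else -1 from rfl]; cases ε 0 <;> simp
    have he1 : e 1 = 1 ∨ e 1 = -1 := by
      rw [show e 1 = if ε 1 then (1:ℤ) else -1 from rfl]; cases ε 1 <;> simp
    have he2 : e 2 = 1 ∨ e 2 = -1 := by
      rw [show e 2 = if ε 2 then (1:ℤ) else -1 from rfl]; cases ε 2 <;> simp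
    have hp7' : (7 : ℤ) ≤ (p : ℤ) := by exact_mod_cast hp7
    clear_value N
    clear hNcard hprod hsum8 factor huniv hSsum hSset hf0 hfm1 hfm2 hL0 hL1 hL2 hP01 hP02 hP12 hT
    clear hfdef hSdef hedef hχdef hneg1 hχ1 hχ0 hχm2
    clear f S
    clear_value e χ
    rcases hs with h|h <;> rcases he0 with h0|h0 <;> rcases he1 with h1|h1 <;>
      rcases he2 with h2'|h2' <;> rw [h, h0, h1, h2'] at hmain <;>
      norm_num at hmain <;> omega
end

section
/- If p is a prime with p ≡ 3 (mod 4), then for each nonzero d ∈ Z_p, the map a ↦ -a-2d gives a bijection between the set of 3-arithmetic progressions (a, a+d, a+2d) of nonzero quadratic residues with common difference d and the set of 3-arithmetic progressions of nonzero quadratic nonresidues with common difference d. -/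
open ZMod in
lemma neg_square_iff (p : ℕ) [Fact p.Prime] (hp : p % 4 = 3)
    (x : ZMod p) (hx : x ≠ 0) : IsSquare (-x) ↔ ¬ IsSquare x := by
  have hp2 : p ≠ 2 := by omega
  have hchar : ringChar (ZMod p) ≠ 2 := by
    rw [ZMod.ringChar_zmod_n]; exact hp2
  have hq : quadraticChar (ZMod p) (-x) = - quadraticChar (ZMod p) x := by
    have : (-x : ZMod p) = -1 * x := by ring
    rw [this, map_mul, quadraticChar_neg_one hchar, ZMod.card,
      ZMod.χ₄_nat_three_mod_four hp]
    ring
  rw [← quadraticChar_one_iff_isSquare (neg_ne_zero.mpr hx), hq,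
    neg_eq_iff_eq_neg, ← quadraticChar_neg_one_iff_not_isSquare]
  
theorem three_ap_bijection (p : ℕ) [Fact p.Prime] (hp : p % 4 = 3)
    (d : ZMod p) (hd : d ≠ 0) :
    Set.BijOn (fun a : ZMod p => -a - 2 * d)
      {a : ZMod p | a ≠ 0 ∧ a + d ≠ 0 ∧ a + 2 * d ≠ 0 ∧
        IsSquare a ∧ IsSquare (a + d) ∧ IsSquare (a + 2 * d)}
      {a : ZMod p | a ≠ 0 ∧ a + d ≠ 0 ∧ a + 2 * d ≠ 0 ∧
        ¬ IsSquare a ∧ ¬ IsSquare (a + d) ∧ ¬ IsSquare (a + 2 * d)} := by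
  have key : ∀ x : ZMod p, x ≠ 0 → (IsSquare (-x) ↔ ¬ IsSquare x) :=
    fun x hx => neg_square_iff p hp x hx
  refine ⟨?_, ?_, ?_⟩
  · rintro a ⟨h0, h1, h2, s0, s1, s2⟩
    simp only [Set.mem_setOf_eq]
    refine ⟨?_, ?_, ?_, ?_, ?_, ?_⟩
    · intro h; apply h2; have : a + 2*d = -(-a - 2*d) := by ring
      rw [this, h]; ring
    · intro h; apply h1; have : a + d = -(-a - 2*d + d) := by ring
      rw [this, h]; ring
    · intro h; apply h0; have : a = -(-a - 2*d + 2*d) := by ring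
      rw [this, h]; ring
    · have : (-a - 2*d : ZMod p) = -(a + 2*d) := by ring
      rw [this, key _ h2]; exact fun h => h s2
    · have : (-a - 2*d + d : ZMod p) = -(a + d) := by ring
      rw [this, key _ h1]; exact fun h => h s1
    · have : (-a - 2*d + 2*d : ZMod p) = -a := by ring
      rw [this, key _ h0]; exact fun h => h s0
  · intro a _ b _ hab
    simp only at hab
    linear_combination -hab
  · rintro b ⟨h0, h1, h2, s0, s1, s2⟩
    refine ⟨-b - 2*d, ⟨?_, ?_, ?_, ?_, ?_, ?_⟩, show -(-b - 2*d) - 2*d = b by ring⟩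
    · intro h; apply h2; have : b + 2*d = -(-b - 2*d) := by ring
      rw [this, h]; ring
    · intro h; apply h1; have : b + d = -(-b - 2*d + d) := by ring
      rw [this, h]; ring
    · intro h; apply h0; have : b = -(-b - 2*d + 2*d) := by ring
      rw [this, h]; ring
    · by_contra h
      have e : (-(-b - 2*d) : ZMod p) = b + 2*d := by ring
      have := (key _ (by simpa using fun hh => h2 (by rw [← e, hh]; simp))) |>.mpr h
      rw [e] at this; exact s2 this
    · by_contra h
      have e : (-(-b - 2*d + d) : ZMod p) = b + d := by ring
      have := (key _ (fun hh => h1 (by rw [← e, hh]; simp))).mpr h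
      rw [e] at this; exact s1 this
    · by_contra h
      have e : (-(-b - 2*d + 2*d) : ZMod p) = b := by ring
      have := (key _ (fun hh => h0 (by rw [← e, hh]; simp))).mpr h
      rw [e] at this; exact s0 this
end
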